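/- If w ∈ S_n contains the pattern 4231, then the number of elements of Bruhat length ℓ(w)-1 in the interval [e,w] is strictly greater than the number of elements of length 1 in [e,w]. -/

import Mathlib

namespace SG

variable {α : Type*} [LinearOrder α] [Fintype α]

/-- The length (number of inversions) of a permutation. -/
noncomputable def len (w : Equiv.Perm α) : ℕ :=
  Set.ncard {p : α × α | p.1 < p.2 ∧ w p.2 < w p.1}

/-- One step of the Bruhat order: multiply by a transposition, increasing length. -/
def lt1 (u v : Equiv.Perm α) : Prop :=
  (∃ i j : α, i ≠ j ∧ v = u * Equiv.swap i j) ∧ len u < len v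

/-- The (strong) Bruhat order. -/
def le (u v : Equiv.Perm α) : Prop := Relation.ReflTransGen lt1 u v

/-- `covers u v` means `v` covers `u` in Bruhat order: `u ≤ v` and `ℓ(u) + 1 = ℓ(v)`. -/
def covers (u v : Equiv.Perm α) : Prop := le u v ∧ len u + 1 = len v

/-- `(i, j)` is a minimal inversion of `w`. -/
def MinimalInversion (w : Equiv.Perm α) (i j : α) : Prop :=
  i < j ∧ w j < w i ∧ ¬ ∃ k, i < k ∧ k < j ∧ w j < w k ∧ w k < w i

/-- `w` contains the pattern given by the values `π 0, …, π (m-1)`. -/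
def Contains (w : Equiv.Perm α) {m : ℕ} (π : Fin m → ℕ) : Prop :=
  ∃ f : Fin m → α, StrictMono f ∧ ∀ a b : Fin m, π a < π b ↔ w (f a) < w (f b)

def Avoids (w : Equiv.Perm α) {m : ℕ} (π : Fin m → ℕ) : Prop := ¬ Contains w π

/-- The set of elements of length `k` in the Bruhat interval `[e, w]`. -/
def Pk (w : Equiv.Perm α) (k : ℕ) : Set (Equiv.Perm α) := {u | le u w ∧ len u = k}

/-- The number of elements of `[e, w]` covering `u`. -/
noncomputable def udeg (w u : Equiv.Perm α) : ℕ := {v | le v w ∧ covers u v}.ncard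

/-- The number of elements of `[e, w]` covered by `u`. -/
noncomputable def ddeg (w u : Equiv.Perm α) : ℕ := {v | le v w ∧ covers v u}.ncard

end SG

namespace BW

open Equiv Finset

variable {n : ℕ}

def invs (w : Equiv.Perm (Fin n)) : Finset (Fin n × Fin n) :=
  univ.filter fun p => p.1 < p.2 ∧ w p.2 < w p.1

lemma len_eq (w : Equiv.Perm (Fin n)) : SG.len w = (invs w).card := by
  rw [SG.len, Set.ncard_eq_toFinset_card']
  congr 1; ext p; simp [invs]

lemma swap_lt (i j a b : Fin n) (hij : i < j) (hab : a < b) :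
    Equiv.swap i j b < Equiv.swap i j a ↔ (a = i ∧ b ≤ j) ∨ (b = j ∧ i ≤ a) := by
  simp only [Equiv.swap_apply_def]
  split_ifs <;> fin_omega

lemma key (w : Equiv.Perm (Fin n)) (i j : Fin n) (hij : i < j) (hinv : w j < w i) :
    SG.len w = SG.len (w * Equiv.swap i j) + 1 +
      2 * (univ.filter fun k => i < k ∧ k < j ∧ w j < w k ∧ w k < w i).card := by
  classical
  set τ := Equiv.swap i j with hτ
  set I := invs w with hI
  set I' := invs (w * τ) with hI'
  set J := univ.filter (fun p : Fin n × Fin n => τ p.1 < τ p.2 ∧ w p.2 < w p.1) with hJ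
  set Bi := univ.filter (fun k => i < k ∧ k < j ∧ w k < w i) with hBi
  set Cj := univ.filter (fun k => i < k ∧ k < j ∧ w j < w k) with hCj
  set Bj := univ.filter (fun k => i < k ∧ k < j ∧ w k < w j) with hBj
  set Ci := univ.filter (fun k => i < k ∧ k < j ∧ w i < w k) with hCi
  set M := univ.filter (fun k => i < k ∧ k < j ∧ w j < w k ∧ w k < w i) with hM
  have hττ : ∀ x, τ (τ x) = x := fun x => Equiv.swap_apply_self i j x
  -- step 1 : I'.card = J.card
  have himg : J.image (fun p => (τ p.1, τ p.2)) = I' := by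
    ext ⟨c, d⟩
    simp only [hJ, hI', invs, mem_image, mem_filter, mem_univ, true_and, Prod.mk.injEq,
      Prod.exists]
    constructor
    · rintro ⟨a, b, ⟨h1, h2⟩, hc, hd⟩
      subst hc; subst hd
      refine ⟨h1, ?_⟩
      simpa [Equiv.Perm.mul_apply, hττ] using h2
    · rintro ⟨h1, h2⟩
      refine ⟨τ c, τ d, ⟨?_, ?_⟩, hττ c, hττ d⟩
      · simpa [hττ] using h1
      · simpa [Equiv.Perm.mul_apply] using h2
  have hinj2 : Function.Injective (fun p : Fin n × Fin n => (τ p.1, τ p.2)) := by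
    rintro ⟨a, b⟩ ⟨c, d⟩ h
    simp only [Prod.mk.injEq] at h
    exact Prod.ext (τ.injective h.1) (τ.injective h.2)
  have step1 : I'.card = J.card := by rw [← himg, card_image_of_injective _ hinj2]
  -- step 2 : I \ J
  have step2 : I \ J = {((i : Fin n), (j : Fin n))} ∪ Bi.image (fun k => (i, k)) ∪
      Cj.image (fun k => (k, j)) := by
    ext ⟨a, b⟩
    simp only [hI, hJ, invs, mem_sdiff, mem_filter, mem_univ, true_and, mem_union,
      mem_singleton, mem_image, Prod.mk.injEq, hBi, hCj]
    constructor
    · rintro ⟨⟨hab, hw⟩, hn⟩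
      have hne : τ a ≠ τ b := fun h => absurd (τ.injective h) (ne_of_lt hab)
      have hlt : τ b < τ a := by
        rcases lt_or_gt_of_ne hne with h | h
        · exact absurd ⟨h, hw⟩ hn
        · exact h
      rcases (swap_lt i j a b hij hab).1 hlt with ⟨rfl, hbj⟩ | ⟨rfl, hia⟩
      · rcases eq_or_lt_of_le hbj with rfl | hbj'
        · exact Or.inl (Or.inl ⟨rfl, rfl⟩)
        · exact Or.inl (Or.inr ⟨b, ⟨hab, hbj', hw⟩, rfl, rfl⟩)
      · rcases eq_or_lt_of_le hia with rfl | hia'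
        · exact Or.inl (Or.inl ⟨rfl, rfl⟩)
        · exact Or.inr ⟨a, ⟨hia', hab, hw⟩, rfl, rfl⟩
    · rintro ((⟨rfl, rfl⟩ | ⟨k, ⟨h1, h2, h3⟩, rfl, rfl⟩) | ⟨k, ⟨h1, h2, h3⟩, rfl, rfl⟩)
      · refine ⟨⟨hij, hinv⟩, ?_⟩
        rintro ⟨hlt, -⟩
        rw [hτ, Equiv.swap_apply_left, Equiv.swap_apply_right] at hlt
        exact absurd hij (not_lt_of_gt hlt)
      · refine ⟨⟨h1, h3⟩, ?_⟩
        rintro ⟨hlt, -⟩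
        have : τ k < τ i := (swap_lt i j i k hij h1).2 (Or.inl ⟨rfl, le_of_lt h2⟩)
        exact absurd hlt (not_lt_of_gt this)
      · refine ⟨⟨h2, h3⟩, ?_⟩
        rintro ⟨hlt, -⟩
        have : τ j < τ k := (swap_lt i j k j hij h2).2 (Or.inr ⟨rfl, le_of_lt h1⟩)
        exact absurd hlt (not_lt_of_gt this)
  -- step 3 : J \ I
  have step3 : J \ I = Bj.image (fun k => (j, k)) ∪ Ci.image (fun k => (k, i)) := by
    ext ⟨a, b⟩
    simp only [hI, hJ, invs, mem_sdiff, mem_filter, mem_univ, true_and, mem_union,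
      mem_image, Prod.mk.injEq, hBj, hCi]
    constructor
    · rintro ⟨⟨hτab, hw⟩, hn⟩
      have hne : a ≠ b := by rintro rfl; exact absurd hw (lt_irrefl _)
      have hba : b < a := by
        rcases lt_or_gt_of_ne hne with h | h
        · exact absurd ⟨h, hw⟩ hn
        · exact h
      rcases (swap_lt i j b a hij hba).1 hτab with ⟨rfl, haj⟩ | ⟨rfl, hib⟩
      · rcases eq_or_lt_of_le haj with rfl | haj'
        · exact absurd (lt_trans hinv hw) (lt_irrefl _)
        · exact Or.inr ⟨a, ⟨hba, haj', hw⟩, rfl, rfl⟩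
      · rcases eq_or_lt_of_le hib with rfl | hib'
        · exact absurd (lt_trans hinv hw) (lt_irrefl _)
        · exact Or.inl ⟨b, ⟨hib', hba, hw⟩, rfl, rfl⟩
    · rintro (⟨k, ⟨h1, h2, h3⟩, rfl, rfl⟩ | ⟨k, ⟨h1, h2, h3⟩, rfl, rfl⟩)
      · refine ⟨⟨(swap_lt i j k j hij h2).2 (Or.inr ⟨rfl, le_of_lt h1⟩), h3⟩, ?_⟩
        rintro ⟨hlt, -⟩
        exact absurd h2 (not_lt_of_gt hlt)
      · refine ⟨⟨(swap_lt i j i k hij h1).2 (Or.inl ⟨rfl, le_of_lt h2⟩), h3⟩, ?_⟩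
        rintro ⟨hlt, -⟩
        exact absurd h1 (not_lt_of_gt hlt)
  -- cards of images
  have cBi : (Bi.image (fun k => ((i : Fin n), k))).card = Bi.card :=
    card_image_of_injective _ (by intro x y h; simpa using h)
  have cCj : (Cj.image (fun k => (k, (j : Fin n)))).card = Cj.card :=
    card_image_of_injective _ (by intro x y h; simpa using h)
  have cBj : (Bj.image (fun k => ((j : Fin n), k))).card = Bj.card :=
    card_image_of_injective _ (by intro x y h; simpa using h)
  have cCi : (Ci.image (fun k => (k, (i : Fin n)))).card = Ci.card :=
    card_image_of_injective _ (by intro x y h; simpa using h)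
  -- disjointness
  have d1 : Disjoint ({((i : Fin n), (j : Fin n))} : Finset (Fin n × Fin n))
      (Bi.image (fun k => ((i : Fin n), k))) := by
    rw [disjoint_left]
    rintro p hp hq
    simp only [mem_singleton] at hp
    subst hp
    simp only [mem_image, hBi, mem_filter, mem_univ, true_and, Prod.mk.injEq] at hq
    obtain ⟨k, ⟨-, hk2, -⟩, -, rfl⟩ := hq
    exact absurd hk2 (lt_irrefl _)
  have d2 : Disjoint ({((i : Fin n), (j : Fin n))} : Finset (Fin n × Fin n))
      (Cj.image (fun k => (k, (j : Fin n)))) := by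
    rw [disjoint_left]
    rintro p hp hq
    simp only [mem_singleton] at hp
    subst hp
    simp only [mem_image, hCj, mem_filter, mem_univ, true_and, Prod.mk.injEq] at hq
    obtain ⟨k, ⟨hk1, -, -⟩, rfl, -⟩ := hq
    exact absurd hk1 (lt_irrefl _)
  have d3 : Disjoint (Bi.image (fun k => ((i : Fin n), k)))
      (Cj.image (fun k => (k, (j : Fin n)))) := by
    rw [disjoint_left]
    rintro ⟨a, b⟩ hp hq
    simp only [mem_image, hBi, hCj, mem_filter, mem_univ, true_and, Prod.mk.injEq] at hp hq
    obtain ⟨k, ⟨hk1, hk2, hk3⟩, h1, rfl⟩ := hp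
    obtain ⟨k', ⟨hk1', hk2', hk3'⟩, h1', h2'⟩ := hq
    subst h1
    exact absurd (h1' ▸ hk1') (lt_irrefl _)
  have d4 : Disjoint (Bj.image (fun k => ((j : Fin n), k)))
      (Ci.image (fun k => (k, (i : Fin n)))) := by
    rw [disjoint_left]
    rintro ⟨a, b⟩ hp hq
    simp only [mem_image, hBj, hCi, mem_filter, mem_univ, true_and, Prod.mk.injEq] at hp hq
    obtain ⟨k, ⟨hk1, hk2, hk3⟩, h1, rfl⟩ := hp
    obtain ⟨k', ⟨hk1', hk2', hk3'⟩, h1', h2'⟩ := hq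
    subst h1
    exact absurd (h1' ▸ hk2') (lt_irrefl _)
  have hIJcard : (I \ J).card = 1 + Bi.card + Cj.card := by
    rw [step2, card_union_of_disjoint (disjoint_union_left.mpr ⟨d2, d3⟩),
      card_union_of_disjoint d1, card_singleton, cBi, cCj]
  have hJIcard : (J \ I).card = Bj.card + Ci.card := by
    rw [step3, card_union_of_disjoint d4, cBj, cCi]
  -- splits
  have hBsplit : Bi.card = Bj.card + M.card := by
    have hsp : Bi = Bj ∪ M := by
      ext k
      simp only [hBi, hBj, hM, mem_filter, mem_univ, true_and, mem_union]
      constructor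
      · rintro ⟨h1, h2, h3⟩
        have hne : w k ≠ w j := fun h => (ne_of_lt h2) (w.injective h)
        rcases lt_or_gt_of_ne hne with h | h
        · exact Or.inl ⟨h1, h2, h⟩
        · exact Or.inr ⟨h1, h2, h, h3⟩
      · rintro (⟨h1, h2, h3⟩ | ⟨h1, h2, h3, h4⟩)
        · exact ⟨h1, h2, lt_trans h3 hinv⟩
        · exact ⟨h1, h2, h4⟩
    have hd : Disjoint Bj M := by
      rw [disjoint_left]
      intro k hk hk'
      simp only [hBj, hM, mem_filter, mem_univ, true_and] at hk hk'
      exact absurd (lt_trans hk.2.2 hk'.2.2.1) (lt_irrefl _)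
    rw [hsp, card_union_of_disjoint hd]
  have hCsplit : Cj.card = Ci.card + M.card := by
    have hsp : Cj = Ci ∪ M := by
      ext k
      simp only [hCj, hCi, hM, mem_filter, mem_univ, true_and, mem_union]
      constructor
      · rintro ⟨h1, h2, h3⟩
        have hne : w k ≠ w i := fun h => (ne_of_gt h1) (w.injective h)
        rcases lt_or_gt_of_ne hne with h | h
        · exact Or.inr ⟨h1, h2, h3, h⟩
        · exact Or.inl ⟨h1, h2, h⟩
      · rintro (⟨h1, h2, h3⟩ | ⟨h1, h2, h3, h4⟩)
        · exact ⟨h1, h2, lt_trans hinv h3⟩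
        · exact ⟨h1, h2, h3⟩
    have hd : Disjoint Ci M := by
      rw [disjoint_left]
      intro k hk hk'
      simp only [hCi, hM, mem_filter, mem_univ, true_and] at hk hk'
      exact absurd (lt_trans hk.2.2 hk'.2.2.2) (lt_irrefl _)
    rw [hsp, card_union_of_disjoint hd]
  -- arithmetic
  have hIc := card_inter_add_card_sdiff I J
  have hJc := card_inter_add_card_sdiff J I
  have hcm : (I ∩ J).card = (J ∩ I).card := by rw [inter_comm]
  have hfinal : I.card = J.card + 1 + 2 * M.card := by omega
  rw [len_eq, len_eq]
  calc (invs w).card = I.card := rfl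
    _ = J.card + 1 + 2 * M.card := hfinal
    _ = I'.card + 1 + 2 * M.card := by rw [step1]
    _ = (invs (w * τ)).card + 1 + 2 * M.card := rfl

lemma swap_indep (d : DecidableEq (Fin n)) (i j : Fin n) :
    @Equiv.swap (Fin n) d i j = @Equiv.swap (Fin n) (instDecidableEqFin n) i j := by congr!

lemma len_mul_swap_lt (w : Equiv.Perm (Fin n)) {i j : Fin n} (hij : i < j) (hinv : w j < w i) :
    SG.len (w * Equiv.swap i j) < SG.len w := by
  have := key w i j hij hinv; omega

lemma mul_swap_swap (w : Equiv.Perm (Fin n)) (i j : Fin n) :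
    w * Equiv.swap i j * Equiv.swap i j = w := by
  rw [mul_assoc, Equiv.swap_mul_self, mul_one]

lemma len_lt_mul_swap (w : Equiv.Perm (Fin n)) {i j : Fin n} (hij : i < j) (hninv : w i < w j) :
    SG.len w < SG.len (w * Equiv.swap i j) := by
  have h2 : (w * Equiv.swap i j) j < (w * Equiv.swap i j) i := by
    simpa [Equiv.Perm.mul_apply] using hninv
  have hk := key (w * Equiv.swap i j) i j hij h2
  rw [mul_swap_swap] at hk
  omega

lemma eq_one_of_len_zero (w : Equiv.Perm (Fin n)) (h : SG.len w = 0) : w = 1 := by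
  rw [len_eq] at h
  have hemp : ∀ p : Fin n × Fin n, p.1 < p.2 → ¬ w p.2 < w p.1 := by
    intro p hp hc
    have : p ∈ invs w := by simp [invs, hp, hc]
    rw [card_eq_zero] at h
    simp [h] at this
  have hmono : StrictMono ⇑w := by
    intro a b hab
    rcases lt_trichotomy (w a) (w b) with h' | h' | h'
    · exact h'
    · exact absurd (w.injective h') (ne_of_lt hab)
    · exact absurd h' (hemp (a, b) hab)
  have h2 : ∀ (e : Fin n ≃o Fin n) (x : Fin n), e x = x := fun e x => by
    rw [Subsingleton.elim e (OrderIso.refl _)]; rfl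
  ext x
  have : w x = x := h2 ⟨w, hmono.le_iff_le⟩ x
  simp [this]

lemma le_cases {u v : Equiv.Perm (Fin n)} (h : SG.le u v) : u = v ∨ SG.len u < SG.len v := by
  induction h with
  | refl => exact Or.inl rfl
  | tail hub hbc ih =>
    rcases ih with rfl | hlt
    · exact Or.inr hbc.2
    · exact Or.inr (lt_trans hlt hbc.2)

lemma le_len_le {u v : Equiv.Perm (Fin n)} (h : SG.le u v) : SG.len u ≤ SG.len v := by
  rcases le_cases h with rfl | h' 
  · exact le_refl _
  · exact le_of_lt h'

def Cr (w : Equiv.Perm (Fin n)) (a : Fin n) : Prop := ∃ x, x ≤ a ∧ a < w x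

lemma perm_maps (w : Equiv.Perm (Fin n)) (S : Finset (Fin n)) (h : ∀ x ∈ S, w x ∈ S) :
    ∀ x, w x ∈ S → x ∈ S := by
  have hsub : S.image ⇑w ⊆ S := Finset.image_subset_iff.mpr h
  have hcard : S.card ≤ (S.image ⇑w).card := by
    rw [Finset.card_image_of_injective _ w.injective]
  have himg : S.image ⇑w = S := Finset.eq_of_subset_of_card_le hsub hcard
  intro x hx
  rw [← himg] at hx
  obtain ⟨y, hy, hyx⟩ := Finset.mem_image.mp hx
  rwa [← w.injective hyx]

lemma not_cr_above {w : Equiv.Perm (Fin n)} {a : Fin n} (h : ¬ Cr w a) :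
    ∀ x, a < x → a < w x := by
  have hlow : ∀ x, x ≤ a → w x ≤ a := by
    intro x hx
    by_contra hc
    exact h ⟨x, hx, lt_of_not_ge hc⟩
  intro x hx
  by_contra hc
  push_neg at hc
  have : x ∈ univ.filter (· ≤ a) := by
    refine perm_maps w _ ?_ x (by simpa using hc)
    intro y hy
    simp only [mem_filter, mem_univ, true_and] at hy ⊢
    exact hlow y hy
  simp only [mem_filter, mem_univ, true_and] at this
  exact absurd hx (not_lt_of_ge this)

lemma cr_low {w : Equiv.Perm (Fin n)} {a : Fin n} (hcr : Cr w a) :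
    ∃ q, a < q ∧ w q ≤ a := by
  by_contra hc
  push_neg at hc
  obtain ⟨x, hxa, hwx⟩ := hcr
  have : x ∈ univ.filter (a < ·) := by
    refine perm_maps w _ ?_ x (by simpa using hwx)
    intro y hy
    simp only [mem_filter, mem_univ, true_and] at hy ⊢
    exact hc y hy
  simp only [mem_filter, mem_univ, true_and] at this
  exact absurd hxa (not_le_of_gt this)

lemma cr_mono {u v : Equiv.Perm (Fin n)} (h : SG.le u v) (a : Fin n) (hcr : Cr u a) : Cr v a := by
  induction h with
  | refl => exact hcr
  | @tail b c hub hbc ih =>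
    obtain ⟨⟨i, j, hne, hceq0⟩, hlen⟩ := hbc
    rw [swap_indep] at hceq0
    have hceq : c = b * Equiv.swap i j := hceq0
    by_contra hnc
    have hforall : ∀ x, x ≤ a → c x ≤ a := by
      intro x hx
      by_contra hcc
      exact hnc ⟨x, hx, lt_of_not_ge hcc⟩
    obtain ⟨x, hxa, hbx⟩ := ih
    have hb : b = c * Equiv.swap i j := by
      rw [hceq]
      ext y
      simp [Equiv.Perm.mul_apply, Equiv.swap_apply_self]
    have hbx' : a < c (Equiv.swap i j x) := by
      rw [hb] at hbx
      exact hbx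
    have hsx : a < Equiv.swap i j x := by
      by_contra h'
      push_neg at h'
      exact absurd hbx' (not_lt_of_ge (hforall _ h'))
    have hswap : Equiv.swap i j = Equiv.swap x (Equiv.swap i j x) := by
      rcases eq_or_ne x i with rfl | hxi
      · rw [Equiv.swap_apply_left]
      · rcases eq_or_ne x j with rfl | hxj
        · rw [Equiv.swap_apply_right, Equiv.swap_comm]
        · rw [Equiv.swap_apply_of_ne_of_ne hxi hxj] at hsx
          exact absurd hxa (not_le_of_gt hsx)
    have hij' : x < Equiv.swap i j x := lt_of_le_of_lt hxa hsx
    have hclt : c x < c (Equiv.swap i j x) := lt_of_le_of_lt (hforall x hxa) hbx'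
    have := len_lt_mul_swap c hij' hclt
    rw [← hswap, ← hb] at this
    exact absurd hlen (not_lt_of_gt this)

lemma mul_swap_swap' (w : Equiv.Perm (Fin n)) (d : DecidableEq (Fin n)) (i j : Fin n) :
    w * @Equiv.swap (Fin n) (instDecidableEqFin n) i j * @Equiv.swap (Fin n) d i j = w := by
  rw [swap_indep d, mul_swap_swap]

lemma card_cross (w : Equiv.Perm (Fin n)) (a : Fin n) :
    (univ.filter fun x => x ≤ a ∧ a < w x).card =
      (univ.filter fun x => a < x ∧ w x ≤ a).card := by
  classical
  set T := univ.filter (fun x : Fin n => x ≤ a) with hT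
  set S := univ.filter (fun x : Fin n => w x ≤ a) with hS
  have hST : S.card = T.card := by
    have himg : S = T.image ⇑w⁻¹ := by
      ext x
      simp only [hS, hT, mem_filter, mem_univ, true_and, mem_image]
      constructor
      · intro h
        exact ⟨w x, h, by simp⟩
      · rintro ⟨y, hy, rfl⟩
        simpa using hy
    rw [himg, card_image_of_injective _ (w⁻¹).injective]
  have h1 : univ.filter (fun x => x ≤ a ∧ a < w x) = T \ S := by
    ext x
    simp only [hS, hT, mem_filter, mem_univ, true_and, mem_sdiff, not_le]
  have h2 : univ.filter (fun x => a < x ∧ w x ≤ a) = S \ T := by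
    ext x
    simp only [hS, hT, mem_filter, mem_univ, true_and, mem_sdiff, not_le]
    tauto
  have e1 := card_inter_add_card_sdiff T S
  have e2 := card_inter_add_card_sdiff S T
  have e3 : (T ∩ S).card = (S ∩ T).card := by rw [inter_comm]
  rw [h1, h2]
  omega

lemma adj_le_of_cr : ∀ N (w : Equiv.Perm (Fin n)) (a b : Fin n), (b : ℕ) = (a : ℕ) + 1 →
    SG.len w ≤ N → Cr w a → SG.le (Equiv.swap a b) w := by
  intro N
  induction N with
  | zero =>
    intro w a b hb hlen hcr
    exfalso
    have hw1 : w = 1 := eq_one_of_len_zero w (Nat.le_zero.mp hlen)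
    obtain ⟨x, hx, hwx⟩ := hcr
    rw [hw1] at hwx
    simp at hwx
    exact absurd hx (not_le_of_gt hwx)
  | succ N IH =>
    intro w a b hb hlen hcr
    by_cases hstep : ∃ i j : Fin n, i < j ∧ w j < w i ∧ Cr (w * Equiv.swap i j) a
    · obtain ⟨i, j, hij, hinv, hcr'⟩ := hstep
      have hlt := len_mul_swap_lt w hij hinv
      have hle : SG.le (Equiv.swap a b) (w * Equiv.swap i j) := IH _ a b hb (by omega) hcr'
      refine Relation.ReflTransGen.tail hle ⟨⟨i, j, ne_of_lt hij, ?_⟩, hlt⟩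
      exact (mul_swap_swap' w _ i j).symm
    · push_neg at hstep
      -- no removable inversion keeps the crossing: show w = swap a b
      have core : ∀ x y, x ≤ a → y ≤ a → a < w x → a < w y → x < y → False := by
        intro x y hx hy hwx hwy hxy
        have hne : w x ≠ w y := w.injective.ne (ne_of_lt hxy)
        rcases lt_or_gt_of_ne hne with h | h
        · obtain ⟨q, hq, hqw⟩ := cr_low hcr
          refine hstep y q (lt_of_le_of_lt hy hq) (lt_of_le_of_lt hqw hwy)
            ⟨x, hx, ?_⟩
          rw [Equiv.Perm.mul_apply,
            Equiv.swap_apply_of_ne_of_ne (ne_of_lt hxy) (ne_of_lt (lt_of_le_of_lt hx hq))]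
          exact hwx
        · refine hstep x y hxy h ⟨x, hx, ?_⟩
          rw [Equiv.Perm.mul_apply, Equiv.swap_apply_left]
          exact hwy
      have huniq : ∀ x, x ≤ a → a < w x → ∀ y, y ≤ a → a < w y → x = y := by
        intro x hx hwx y hy hwy
        by_contra hne
        rcases lt_or_gt_of_ne hne with h | h
        · exact core x y hx hy hwx hwy h
        · exact core y x hy hx hwy hwx h
      obtain ⟨p0, hp0a, hp0w⟩ := hcr
      have hpa : p0 = a := by
        by_contra hne
        have hp0lt : p0 < a := lt_of_le_of_ne hp0a hne
        have hwa : w a ≤ a := by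
          by_contra h'
          push_neg at h'
          exact hne (huniq p0 hp0a hp0w a (le_refl a) h')
        refine hstep p0 a hp0lt (lt_of_le_of_lt hwa hp0w) ⟨a, le_refl a, ?_⟩
        rw [Equiv.Perm.mul_apply, Equiv.swap_apply_right]
        exact hp0w
      have hwa' : a < w a := hpa ▸ hp0w
      set E := univ.filter (fun q : Fin n => a < q ∧ w q ≤ a) with hE
      have hEne : E.Nonempty := by
        obtain ⟨q, hq1, hq2⟩ := cr_low ⟨a, le_refl a, hwa'⟩
        exact ⟨q, by simp [hE, hq1, hq2]⟩
      have hEcard : E.card = 1 := by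
        have hD : univ.filter (fun x : Fin n => x ≤ a ∧ a < w x) = {a} := by
          ext x
          simp only [mem_filter, mem_univ, true_and, mem_singleton]
          constructor
          · rintro ⟨hx, hwx⟩
            exact huniq x hx hwx a (le_refl a) hwa'
          · rintro rfl
            exact ⟨le_refl _, hwa'⟩
        have hcc := card_cross w a
        rw [hD, card_singleton] at hcc
        rw [hE]
        omega
      obtain ⟨q, hq⟩ := card_eq_one.mp hEcard
      have hqmem : q ∈ E := hq ▸ mem_singleton_self q
      have hqa : a < q ∧ w q ≤ a := by simpa [hE] using hqmem
      have hqb : q = b := by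
        by_contra hne
        have hq2 : (a : ℕ) + 1 < (q : ℕ) := by
          have h1 : (a : ℕ) < q := hqa.1
          have h2 : (q : ℕ) ≠ (b : ℕ) := fun h => hne (Fin.ext h)
          omega
        have hzlt : (a : ℕ) + 1 < n := lt_trans hq2 q.isLt
        set z : Fin n := ⟨(a : ℕ) + 1, hzlt⟩ with hz
        have hza : a < z := by simp [hz, Fin.lt_def]
        have hzq : z < q := by simp [hz, Fin.lt_def]; omega
        have hznE : z ∉ E := by
          rw [hq]
          simp only [mem_singleton]
          exact ne_of_lt hzq
        have hwz : a < w z := by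
          simp only [hE, mem_filter, mem_univ, true_and, not_and, not_le] at hznE
          exact hznE hza
        refine hstep z q hzq (lt_of_le_of_lt hqa.2 hwz) ⟨a, le_refl a, ?_⟩
        rw [Equiv.Perm.mul_apply,
          Equiv.swap_apply_of_ne_of_ne (ne_of_lt hza) (ne_of_lt hqa.1)]
        exact hwa'
      have hinvs : invs w = {(a, q)} := by
        ext ⟨x, y⟩
        simp only [invs, mem_filter, mem_univ, true_and, mem_singleton, Prod.mk.injEq]
        constructor
        · rintro ⟨hxy, hwxy⟩
          have hxa : x = a := by
            by_cases hay : y = a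
            · subst hay
              exfalso
              have hx' : x ≤ y := le_of_lt hxy
              have hwx' : y < w x := lt_trans hwa' hwxy
              exact ne_of_lt hxy (huniq x hx' hwx' y (le_refl y) hwa')
            · by_cases hax : x = a
              · exact hax
              · exfalso
                refine hstep x y hxy hwxy ⟨a, le_refl a, ?_⟩
                rw [Equiv.Perm.mul_apply,
                  Equiv.swap_apply_of_ne_of_ne (Ne.symm hax) (fun h => hay h.symm)]
                exact hwa'
          refine ⟨hxa, ?_⟩
          have hay' : a < y := hxa ▸ hxy
          by_cases hwy : w y ≤ a
          · have hyE : y ∈ E := by simp [hE, hay', hwy]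
            rw [hq] at hyE
            simpa using hyE
          · exfalso
            push_neg at hwy
            refine hstep x y hxy hwxy ⟨x, le_of_eq hxa, ?_⟩
            rw [Equiv.Perm.mul_apply, Equiv.swap_apply_left]
            exact hwy
        · rintro ⟨rfl, rfl⟩
          exact ⟨hqa.1, lt_of_le_of_lt hqa.2 hwa'⟩
      have hlen1 : SG.len w = 1 := by rw [len_eq, hinvs, card_singleton]
      have hMz : (univ.filter fun k => a < k ∧ k < q ∧ w q < w k ∧ w k < w a).card = 0 := by
        rw [card_eq_zero, filter_eq_empty_iff]
        rintro k - ⟨h1, h2, -, -⟩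
        rw [hqb] at h2
        fin_omega
      have hk := key w a q hqa.1 (lt_of_le_of_lt hqa.2 hwa')
      have hlz : SG.len (w * Equiv.swap a q) = 0 := by omega
      have hone := eq_one_of_len_zero _ hlz
      have hw : w = Equiv.swap a q := by
        have h2 := congrArg (fun u => u * Equiv.swap a q) hone
        rw [mul_swap_swap, one_mul] at h2
        exact h2
      rw [hw, hqb]
      exact Relation.ReflTransGen.refl

lemma len_adj_swap (a b : Fin n) (hb : (b : ℕ) = (a : ℕ) + 1) :
    SG.len (Equiv.swap a b) = 1 := by
  have hab : a < b := by fin_omega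
  rw [len_eq]
  have hset : invs (Equiv.swap a b) = {(a, b)} := by
    ext ⟨x, y⟩
    simp only [invs, mem_filter, mem_univ, true_and, mem_singleton, Prod.mk.injEq]
    constructor
    · rintro ⟨hxy, hlt⟩
      rcases (swap_lt a b x y hab hxy).1 hlt with ⟨rfl, hyb⟩ | ⟨rfl, hax⟩
      · exact ⟨rfl, by fin_omega⟩
      · exact ⟨by fin_omega, rfl⟩
    · rintro ⟨rfl, rfl⟩
      exact ⟨hab, (swap_lt _ _ _ _ hab hab).2 (Or.inl ⟨rfl, le_refl _⟩)⟩
  rw [hset, card_singleton]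

lemma atom_mem (w u : Equiv.Perm (Fin n)) :
    u ∈ SG.Pk w 1 ↔ ∃ a b : Fin n, (b : ℕ) = (a : ℕ) + 1 ∧ Cr w a ∧ u = Equiv.swap a b := by
  constructor
  · rintro ⟨hle, hlen⟩
    have h1 : (invs u).card = 1 := by rw [← len_eq]; exact hlen
    obtain ⟨⟨p, q⟩, hpq⟩ := card_eq_one.mp h1
    have hmem : (p, q) ∈ invs u := hpq ▸ mem_singleton_self _
    simp only [invs, mem_filter, mem_univ, true_and] at hmem
    obtain ⟨hpq1, hpq2⟩ := hmem
    have hq1 : (q : ℕ) = (p : ℕ) + 1 := by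
      by_contra hne
      have hpn : (p : ℕ) + 1 < n := by
        have := q.isLt
        have : (p : ℕ) < q := hpq1
        omega
      set z : Fin n := ⟨(p : ℕ) + 1, hpn⟩ with hz
      have hpz : p < z := by simp [hz, Fin.lt_def]
      have hzq : z < q := by simp [hz, Fin.lt_def]; fin_omega
      rcases lt_or_gt_of_ne (u.injective.ne (ne_of_lt hpz)) with h | h
      · have : (z, q) ∈ invs u := by
          simp only [invs, mem_filter, mem_univ, true_and]
          exact ⟨hzq, lt_trans hpq2 h⟩
        rw [hpq] at this
        simp only [mem_singleton, Prod.mk.injEq] at this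
        exact absurd this.1 (ne_of_gt hpz)
      · have : (p, z) ∈ invs u := by
          simp only [invs, mem_filter, mem_univ, true_and]
          exact ⟨hpz, h⟩
        rw [hpq] at this
        simp only [mem_singleton, Prod.mk.injEq] at this
        exact absurd this.2 (ne_of_lt hzq)
    have hM0 : (univ.filter fun k => p < k ∧ k < q ∧ u q < u k ∧ u k < u p).card = 0 := by
      rw [card_eq_zero, filter_eq_empty_iff]
      rintro k - ⟨h1', h2', -, -⟩
      fin_omega
    have hkey := key u p q hpq1 hpq2
    have hlz : SG.len (u * Equiv.swap p q) = 0 := by omega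
    have hu1 := eq_one_of_len_zero _ hlz
    have hu : u = Equiv.swap p q := by
      have h2 := congrArg (fun v => v * Equiv.swap p q) hu1
      rw [mul_swap_swap, one_mul] at h2
      exact h2
    have hcr : Cr w p := by
      refine cr_mono hle p ⟨p, le_refl p, ?_⟩
      rw [hu, Equiv.swap_apply_left]
      exact hpq1
    exact ⟨p, q, hq1, hcr, hu⟩
  · rintro ⟨a, b, hb, hcr, rfl⟩
    exact ⟨adj_le_of_cr (SG.len w) w a b hb (le_refl _) hcr, len_adj_swap a b hb⟩

lemma coatom_mem (w u : Equiv.Perm (Fin n)) (hw : 1 ≤ SG.len w) :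
    u ∈ SG.Pk w (SG.len w - 1) ↔
      ∃ i j : Fin n, SG.MinimalInversion w i j ∧ u = w * Equiv.swap i j := by
  constructor
  · rintro ⟨hle, hlen⟩
    have hlt : SG.len u < SG.len w := by omega
    have hneu : u ≠ w := fun h => by rw [h] at hlt; exact lt_irrefl _ hlt
    rcases Relation.ReflTransGen.cases_tail hle with h | ⟨c, huc, hcw⟩
    · exact absurd h.symm hneu
    · have h1 := le_len_le huc
      have h2 := hcw.2
      have hcu : u = c := by
        rcases le_cases huc with h | h
        · exact h
        · exfalso; omega
      rw [← hcu] at hcw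
      obtain ⟨⟨i, j, hne2, hweq⟩, -⟩ := hcw
      rw [swap_indep] at hweq
      obtain ⟨i', j', hij', hweq'⟩ : ∃ i' j', i' < j' ∧ w = u * Equiv.swap i' j' := by
        rcases lt_or_gt_of_ne hne2 with h | h
        · exact ⟨i, j, h, hweq⟩
        · exact ⟨j, i, h, by rw [hweq, Equiv.swap_comm]⟩
      have hu : u = w * Equiv.swap i' j' := by rw [hweq', mul_swap_swap]
      have hinv : w j' < w i' := by
        by_contra hc
        push_neg at hc
        have hlt2 : w i' < w j' :=
          lt_of_le_of_ne hc (w.injective.ne (ne_of_lt hij'))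
        have := len_lt_mul_swap w hij' hlt2
        rw [← hu] at this
        exact absurd hlt (not_lt_of_gt this)
      have hkey := key w i' j' hij' hinv
      rw [← hu] at hkey
      have hM : (univ.filter fun k => i' < k ∧ k < j' ∧ w j' < w k ∧ w k < w i').card = 0 := by
        omega
      refine ⟨i', j', ⟨hij', hinv, ?_⟩, hu⟩
      rintro ⟨k, hk1, hk2, hk3, hk4⟩
      rw [card_eq_zero] at hM
      have : k ∈ univ.filter fun k => i' < k ∧ k < j' ∧ w j' < w k ∧ w k < w i' := by
        simp only [mem_filter, mem_univ, true_and]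
        exact ⟨hk1, hk2, hk3, hk4⟩
      simp [hM] at this
  · rintro ⟨i, j, ⟨hij, hinv, hmin⟩, rfl⟩
    have hkey := key w i j hij hinv
    have hM : (univ.filter fun k => i < k ∧ k < j ∧ w j < w k ∧ w k < w i).card = 0 := by
      rw [card_eq_zero, filter_eq_empty_iff]
      rintro k - ⟨h1, h2, h3, h4⟩
      exact hmin ⟨k, h1, h2, h3, h4⟩
    constructor
    · refine Relation.ReflTransGen.single ⟨⟨i, j, ne_of_lt hij, ?_⟩, len_mul_swap_lt w hij hinv⟩
      exact (mul_swap_swap' w _ i j).symm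
    · omega

def Qset (w : Equiv.Perm (Fin n)) (a : Fin n) : Finset (Fin n) :=
  univ.filter fun q => a < q ∧ ∃ p, p ≤ a ∧ w q < w p

noncomputable def qq (w : Equiv.Perm (Fin n)) (a : Fin n) : Fin n :=
  if h : (Qset w a).Nonempty then (Qset w a).min' h else a

noncomputable def Pset (w : Equiv.Perm (Fin n)) (a : Fin n) : Finset (Fin n) :=
  univ.filter fun p => p ≤ a ∧ w (qq w a) < w p

noncomputable def pp (w : Equiv.Perm (Fin n)) (a : Fin n) : Fin n :=
  if h : (Pset w a).Nonempty then (Pset w a).max' h else a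

variable {w : Equiv.Perm (Fin n)} {a : Fin n}

lemma Qset_ne (hcr : Cr w a) : (Qset w a).Nonempty := by
  obtain ⟨x, hx, hwx⟩ := hcr
  obtain ⟨q, hq, hqw⟩ := cr_low ⟨x, hx, hwx⟩
  refine ⟨q, ?_⟩
  simp only [Qset, mem_filter, mem_univ, true_and]
  exact ⟨hq, x, hx, lt_of_le_of_lt hqw hwx⟩

lemma qq_mem (hcr : Cr w a) : a < qq w a ∧ ∃ p, p ≤ a ∧ w (qq w a) < w p := by
  have hne := Qset_ne hcr
  have hmm := min'_mem _ hne
  rw [qq, dif_pos hne]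
  simpa only [Qset, mem_filter, mem_univ, true_and] using hmm

lemma qq_le (hcr : Cr w a) {k : Fin n} (hak : a < k) (hk : ∃ p, p ≤ a ∧ w k < w p) :
    qq w a ≤ k := by
  have hne := Qset_ne hcr
  rw [qq, dif_pos hne]
  exact min'_le _ _ (by simp only [Qset, mem_filter, mem_univ, true_and]; exact ⟨hak, hk⟩)

lemma qq_min (hcr : Cr w a) {k : Fin n} (hak : a < k) (hkq : k < qq w a) :
    ∀ p, p ≤ a → w p < w k := by
  intro p hpa
  by_contra hc
  push_neg at hc
  have hne' : w k ≠ w p := w.injective.ne (ne_of_gt (lt_of_le_of_lt hpa hak))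
  have : qq w a ≤ k := qq_le hcr hak ⟨p, hpa, lt_of_le_of_ne hc hne'⟩
  exact absurd hkq (not_lt_of_ge this)

lemma Pset_ne (hcr : Cr w a) : (Pset w a).Nonempty := by
  obtain ⟨-, p, hp1, hp2⟩ := qq_mem hcr
  exact ⟨p, by simp only [Pset, mem_filter, mem_univ, true_and]; exact ⟨hp1, hp2⟩⟩

lemma pp_mem (hcr : Cr w a) : pp w a ≤ a ∧ w (qq w a) < w (pp w a) := by
  have hne := Pset_ne hcr
  have hmm := max'_mem _ hne
  rw [pp, dif_pos hne]
  simpa only [Pset, mem_filter, mem_univ, true_and] using hmm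

lemma pp_ge (hcr : Cr w a) {k : Fin n} (hka : k ≤ a) (hk : w (qq w a) < w k) :
    k ≤ pp w a := by
  have hne := Pset_ne hcr
  rw [pp, dif_pos hne]
  exact le_max' _ _ (by simp only [Pset, mem_filter, mem_univ, true_and]; exact ⟨hka, hk⟩)

lemma pp_max (hcr : Cr w a) {k : Fin n} (hpk : pp w a < k) (hka : k ≤ a) :
    w k < w (qq w a) := by
  by_contra hc
  push_neg at hc
  have hkq : k ≠ qq w a := ne_of_lt (lt_of_le_of_lt hka (qq_mem hcr).1)
  have : k ≤ pp w a := pp_ge hcr hka (lt_of_le_of_ne hc (fun h => hkq (w.injective h.symm)))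
  exact absurd hpk (not_lt_of_ge this)

lemma phi_minimal (hcr : Cr w a) : SG.MinimalInversion w (pp w a) (qq w a) := by
  obtain ⟨hpa, hwpq⟩ := pp_mem hcr
  have haq := (qq_mem hcr).1
  refine ⟨lt_of_le_of_lt hpa haq, hwpq, ?_⟩
  rintro ⟨k, hk1, hk2, hk3, hk4⟩
  rcases le_or_gt k a with hka | hak
  · exact absurd (pp_max hcr hk1 hka) (not_lt_of_gt hk3)
  · exact absurd (qq_min hcr hak hk2 (pp w a) hpa) (not_lt_of_gt hk4)

lemma phi_inj {a' : Fin n} (haa' : a < a') (hcr : Cr w a) (hcr' : Cr w a')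
    (hpeq : pp w a = pp w a') (hqeq : qq w a = qq w a') : False := by
  have h1 : a' < qq w a := by rw [hqeq]; exact (qq_mem hcr').1
  have h3 : w (pp w a) < w a' := qq_min hcr haa' h1 (pp w a) (pp_mem hcr).1
  have h4 : w (qq w a') < w a' := by
    have := (pp_mem hcr').2
    rw [← hpeq] at this
    exact lt_trans this h3
  have h5 : ¬ pp w a' < a' := fun hlt =>
    absurd (pp_max hcr' hlt (le_refl a')) (not_lt_of_gt h4)
  have h6 : pp w a' ≤ a := by rw [← hpeq]; exact (pp_mem hcr).1
  exact h5 (lt_of_le_of_lt h6 haa')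

lemma phi_missed {P Q e k : Fin n} (hm : SG.MinimalInversion w P Q) (heP : e < P)
    (hPk : P < k) (hkQ : k < Q) (hv1 : w P < w k) (hv2 : w k < w e) :
    ∀ a, Cr w a → ¬ (pp w a = P ∧ qq w a = Q) := by
  rintro a hcr ⟨hp, hq⟩
  have hPa : P ≤ a := by rw [← hp]; exact (pp_mem hcr).1
  have haQ : a < Q := by rw [← hq]; exact (qq_mem hcr).1
  rcases lt_or_ge a k with hak | hka
  · have hle : qq w a ≤ k := qq_le hcr hak ⟨e, le_trans (le_of_lt heP) hPa, hv2⟩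
    rw [hq] at hle
    exact absurd hkQ (not_lt_of_ge hle)
  · have hwk : w (qq w a) < w k := by
      rw [hq]
      exact lt_trans hm.2.1 hv1
    have := pp_ge hcr hka hwk
    rw [hp] at this
    exact absurd hPk (not_lt_of_ge this)

lemma mass (w : Equiv.Perm (Fin n)) : ∀ N (e P k Q : Fin n), (Q : ℕ) - (P : ℕ) ≤ N →
    e < P → P < k → k < Q → w Q < w P → w P < w k → w k < w e →
    ∃ e' P' k' Q' : Fin n, e' < P' ∧ P' < k' ∧ k' < Q' ∧ w Q' < w P' ∧ w P' < w k' ∧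
      w k' < w e' ∧ SG.MinimalInversion w P' Q' := by
  intro N
  induction N with
  | zero =>
    intro e P k Q hN h1 h2 h3 h4 h5 h6
    exfalso
    fin_omega
  | succ N IH =>
    intro e P k Q hN h1 h2 h3 h4 h5 h6
    by_cases hmin : ∃ m, P < m ∧ m < Q ∧ w Q < w m ∧ w m < w P
    · obtain ⟨m, hm1, hm2, hm3, hm4⟩ := hmin
      have hmk : m ≠ k := fun h => absurd (h ▸ hm4) (not_lt_of_gt h5)
      rcases lt_or_gt_of_ne hmk with hmk' | hmk'
      · exact IH e m k Q (by fin_omega) (lt_trans h1 hm1) hmk' h3 hm3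
          (lt_trans hm4 h5) h6
      · exact IH e P k m (by fin_omega) h1 h2 hmk' hm4 h5 h6
    · exact ⟨e, P, k, Q, h1, h2, h3, h4, h5, h6, lt_trans h2 h3, h4, hmin⟩

def asucc (a : Fin n) : Fin n := if h : (a : ℕ) + 1 < n then ⟨(a : ℕ) + 1, h⟩ else a

lemma asucc_val {a : Fin n} (h : (a : ℕ) + 1 < n) : ((asucc a : Fin n) : ℕ) = (a : ℕ) + 1 := by
  rw [asucc, dif_pos h]

lemma cr_succ_lt (hcr : Cr w a) : (a : ℕ) + 1 < n := by
  obtain ⟨x, hx, hwx⟩ := hcr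
  have h1 := (w x).isLt
  have h2 : (a : ℕ) < ((w x : Fin n) : ℕ) := hwx
  omega

lemma pk1_ncard (w : Equiv.Perm (Fin n)) :
    (SG.Pk w 1).ncard = {a : Fin n | Cr w a}.ncard := by
  have himg : SG.Pk w 1 = (fun a : Fin n => Equiv.swap a (asucc a)) '' {a : Fin n | Cr w a} := by
    ext u
    rw [atom_mem w u]
    constructor
    · rintro ⟨a, b, hb, hcr, rfl⟩
      refine ⟨a, hcr, ?_⟩
      have hn := cr_succ_lt hcr
      have hab : asucc a = b := Fin.ext (by rw [asucc_val hn, hb])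
      simp only
      rw [hab]
    · rintro ⟨a, hcr, rfl⟩
      have hn := cr_succ_lt hcr
      exact ⟨a, asucc a, asucc_val hn, hcr, rfl⟩
  rw [himg, Set.ncard_image_of_injOn]
  intro a ha a' ha' heq
  simp only [Set.mem_setOf_eq] at ha ha'
  have hn := cr_succ_lt ha
  have hn' := cr_succ_lt ha'
  simp only at heq
  by_contra hne
  have h1 : Equiv.swap a (asucc a) a = asucc a := Equiv.swap_apply_left _ _
  rw [heq] at h1
  by_cases hab : a = asucc a'
  · have h1' : Equiv.swap a' (asucc a') a = a' := by rw [hab, Equiv.swap_apply_right]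
    have h2 : a' = asucc a := h1'.symm.trans h1
    have e1 : (a : ℕ) = (a' : ℕ) + 1 := (congrArg Fin.val hab).trans (asucc_val hn')
    have e2 : (a' : ℕ) = (a : ℕ) + 1 := (congrArg Fin.val h2).trans (asucc_val hn)
    omega
  · rw [Equiv.swap_apply_of_ne_of_ne hne hab] at h1
    have := congrArg Fin.val h1
    rw [asucc_val hn] at this
    omega

lemma coatom_ncard (w : Equiv.Perm (Fin n)) (hw : 1 ≤ SG.len w) :
    (SG.Pk w (SG.len w - 1)).ncard = {p : Fin n × Fin n | SG.MinimalInversion w p.1 p.2}.ncard := by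
  have himg : SG.Pk w (SG.len w - 1) =
      (fun p : Fin n × Fin n => w * Equiv.swap p.1 p.2) ''
        {p : Fin n × Fin n | SG.MinimalInversion w p.1 p.2} := by
    ext u
    rw [coatom_mem w u hw]
    constructor
    · rintro ⟨i, j, hm, rfl⟩
      exact ⟨(i, j), hm, rfl⟩
    · rintro ⟨⟨i, j⟩, hm, rfl⟩
      exact ⟨i, j, hm, rfl⟩
  rw [himg, Set.ncard_image_of_injOn]
  rintro ⟨i, j⟩ hij ⟨i', j'⟩ hij' heq
  simp only [Set.mem_setOf_eq] at hij hij'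
  simp only at heq
  have heq2 : Equiv.swap i j = Equiv.swap i' j' := mul_left_cancel heq
  have h1 : Equiv.swap i j i = j := Equiv.swap_apply_left _ _
  rw [heq2] at h1
  by_cases hii : i = i'
  · subst hii
    rw [Equiv.swap_apply_left] at h1
    rw [h1]
  · by_cases hij2 : i = j'
    · rw [hij2, Equiv.swap_apply_right] at h1
      exfalso
      have c1 : i' < j' := hij'.1
      have c2 : i < j := hij.1
      rw [← hij2] at c1
      rw [← h1] at c2
      exact absurd (lt_trans c1 c2) (lt_irrefl _)
    · rw [Equiv.swap_apply_of_ne_of_ne hii hij2] at h1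
      exact absurd h1 (ne_of_lt hij.1)

theorem main (w : Equiv.Perm (Fin n)) (h : SG.Contains w ![4, 2, 3, 1]) :
    (SG.Pk w 1).ncard < (SG.Pk w (SG.len w - 1)).ncard := by
  obtain ⟨f, hf, hp⟩ := h
  have hf01 : f 0 < f 1 := hf (by decide)
  have hf12 : f 1 < f 2 := hf (by decide)
  have hf23 : f 2 < f 3 := hf (by decide)
  have hv31 : w (f 3) < w (f 1) := (hp 3 1).1 (by decide)
  have hv12 : w (f 1) < w (f 2) := (hp 1 2).1 (by decide)
  have hv20 : w (f 2) < w (f 0) := (hp 2 0).1 (by decide)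
  obtain ⟨e, P, k, Q, he, hPk, hkQ, hQP, hPkv, hkev, hmin⟩ :=
    mass w n (f 0) (f 1) (f 2) (f 3) (by omega) hf01 hf12 hf23 hv31 hv12 hv20
  have hw1 : 1 ≤ SG.len w := by
    rw [len_eq]
    have hmem : (P, Q) ∈ invs w := by
      simp only [invs, mem_filter, mem_univ, true_and]
      exact ⟨hmin.1, hmin.2.1⟩
    exact card_pos.mpr ⟨_, hmem⟩
  rw [pk1_ncard, coatom_ncard w hw1]
  have hPQmem : (P, Q) ∈ {p : Fin n × Fin n | SG.MinimalInversion w p.1 p.2} := hmin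
  have hsub : (fun a : Fin n => (pp w a, qq w a)) '' {a : Fin n | Cr w a} ⊆
      {p : Fin n × Fin n | SG.MinimalInversion w p.1 p.2} \ {(P, Q)} := by
    rintro ⟨x, y⟩ ⟨a, hcr, heq⟩
    simp only [Set.mem_setOf_eq] at hcr
    simp only [Prod.mk.injEq] at heq
    obtain ⟨hx, hy⟩ := heq
    constructor
    · simp only [Set.mem_setOf_eq]
      rw [← hx, ← hy]
      exact phi_minimal hcr
    · simp only [Set.mem_singleton_iff, Prod.mk.injEq]
      rintro ⟨rfl, rfl⟩
      exact phi_missed hmin he hPk hkQ hPkv hkev a hcr ⟨hx, hy⟩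
  have hinjφ : Set.InjOn (fun a : Fin n => (pp w a, qq w a)) {a : Fin n | Cr w a} := by
    intro a ha a' ha' heq
    simp only [Set.mem_setOf_eq] at ha ha'
    simp only [Prod.mk.injEq] at heq
    by_contra hne
    rcases lt_or_gt_of_ne hne with h' | h'
    · exact phi_inj h' ha ha' heq.1 heq.2
    · exact phi_inj h' ha' ha heq.1.symm heq.2.symm
  calc {a : Fin n | Cr w a}.ncard
      = ((fun a : Fin n => (pp w a, qq w a)) '' {a : Fin n | Cr w a}).ncard :=
        (Set.ncard_image_of_injOn hinjφ).symm
    _ ≤ ({p : Fin n × Fin n | SG.MinimalInversion w p.1 p.2} \ {(P, Q)}).ncard :=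
        Set.ncard_le_ncard hsub (Set.toFinite _)
    _ < {p : Fin n × Fin n | SG.MinimalInversion w p.1 p.2}.ncard :=
        Set.ncard_diff_singleton_lt_of_mem hPQmem (Set.toFinite _)

end BW


open SG Equiv


theorem stmt2 {n : ℕ} (w : Equiv.Perm (Fin n)) (h : Contains w ![4, 2, 3, 1]) :
    (Pk w 1).ncard < (Pk w (len w - 1)).ncard :=
  BW.main w h
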